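/- The quantum capacity of the memory channel correlated by the parametrized Majumdar–Ghosh state equals Q = 1 + (g/2)log₂ g + ((1−g)/2)log₂(1−g) for g ∈ (0,1); i.e., with the diagonal spectrum of ρ_MG^{(n)} given in the MG spectrum lemma (both parities of n), lim_{n→∞} S(diag(ρ_MG^{(n)}))/n = −(g/2)log₂ g − ((1−g)/2)log₂(1−g). -/

import Mathlib

open Real Filter Finset

/-- Shannon entropy (in bits) of the diagonal spectrum of the Majumdar–Ghosh local
density matrix `ρ_MG^{(n)}`, for odd and even `n` (here `⌈n/2⌉ = (n+1)/2` in ℕ). -/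
noncomputable def mgDiagEntropy (g : ℝ) (n : ℕ) : ℝ :=
  if Odd n then
    -(2 * (((1-g)^((n+1)/2) + g^((n+1)/2))/2)
        * Real.logb 2 (((1-g)^((n+1)/2) + g^((n+1)/2))/2)
      + ∑ i ∈ Finset.Icc 1 ((n+1)/2 - 1),
          2 * (((n+1)/2).choose ((n+1)/2 - i) : ℝ) * ((1-g)^i * g^((n+1)/2 - i)/2)
            * Real.logb 2 ((1-g)^i * g^((n+1)/2 - i)/2))
  else
    -((((1-g)^(n/2) + g^(n/2 + 1))/2) * Real.logb 2 (((1-g)^(n/2) + g^(n/2 + 1))/2)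
      + ∑ i ∈ Finset.Icc 1 (n/2 - 1),
          ((n/2).choose i : ℝ) * (g^i * (1-g)^(n/2 - i)/2)
            * Real.logb 2 (g^i * (1-g)^(n/2 - i)/2)
      + ∑ i ∈ Finset.Icc 1 (n/2),
          ((n/2 + 1).choose i : ℝ) * (g^(n/2 - i + 1) * (1-g)^i/2)
            * Real.logb 2 (g^(n/2 - i + 1) * (1-g)^i/2)
      + (((1-g)^(n/2 + 1) + g^(n/2))/2) * Real.logb 2 (((1-g)^(n/2 + 1) + g^(n/2))/2))

-- φ and its continuity
noncomputable def mgPhi (x : ℝ) : ℝ := x * Real.logb 2 (x/2)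

lemma mgPhi_tendsto : Tendsto mgPhi (nhds 0) (nhds 0) := by
  have h : mgPhi = fun x => (2 * ((x/2) * Real.log (x/2))) / Real.log 2 := by
    funext x; simp only [mgPhi, Real.logb]; ring
  rw [h]
  have hc : Continuous fun x : ℝ => (2 * ((x/2) * Real.log (x/2))) / Real.log 2 :=
    ((continuous_const.mul (Real.continuous_mul_log.comp (continuous_id.div_const 2))).div_const _)
  have := hc.tendsto 0
  simpa using this

-- binomial sum lemmas
lemma binom_sum (a b : ℝ) (m : ℕ) :
    ∑ i ∈ range (m+1), (m.choose i : ℝ) * (a^i * b^(m-i)) = (a+b)^m := by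
  rw [add_pow]
  exact Finset.sum_congr rfl fun i _ => by ring

lemma binom_moment (a b : ℝ) (hab : a + b = 1) (m : ℕ) :
    ∑ i ∈ range (m+1), (i : ℝ) * (m.choose i : ℝ) * (a^i * b^(m-i)) = m * a := by
  cases m with
  | zero => simp
  | succ m =>
    rw [Finset.sum_range_succ']
    simp only [Nat.cast_zero, zero_mul, add_zero]
    have key : ∀ k ∈ range (m+1), ((k+1 : ℕ) : ℝ) * ((m+1).choose (k+1) : ℝ)
        * (a^(k+1) * b^(m+1-(k+1))) = ((m+1 : ℕ) : ℝ) * a * ((m.choose k : ℝ) * (a^k * b^(m-k))) := by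
      intro k _
      have h := Nat.add_one_mul_choose_eq m k
      have h2 : ((m+1 : ℕ) : ℝ) * (m.choose k : ℝ) = ((m+1).choose (k+1) : ℝ) * ((k+1 : ℕ) : ℝ) := by
        exact_mod_cast congrArg (Nat.cast : ℕ → ℝ) h
      have h3 : m + 1 - (k+1) = m - k := by omega
      rw [h3, pow_succ]
      linear_combination (-(a^k * a * b^(m-k))) * h2
    rw [Finset.sum_congr rfl key, ← Finset.mul_sum, binom_sum, hab, one_pow, mul_one]

lemma binom_moment_rev (a b : ℝ) (hab : a + b = 1) (m : ℕ) :
    ∑ i ∈ range (m+1), ((m - i : ℕ) : ℝ) * (m.choose i : ℝ) * (a^i * b^(m-i)) = m * b := by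
  have hrefl := Finset.sum_range_reflect
    (fun i => ((m - i : ℕ) : ℝ) * (m.choose i : ℝ) * (a^i * b^(m-i))) (m+1)
  simp only [Nat.add_sub_cancel] at hrefl
  rw [← hrefl]
  have hstep : ∀ j ∈ range (m+1),
      ((m - (m - j) : ℕ) : ℝ) * (m.choose (m - j) : ℝ) * (a^(m-j) * b^(m-(m-j)))
      = (j : ℝ) * (m.choose j : ℝ) * (b^j * a^(m-j)) := by
    intro j hj
    have hj' : j ≤ m := Nat.lt_succ_iff.mp (Finset.mem_range.mp hj)
    rw [Nat.sub_sub_self hj', Nat.choose_symm hj']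
    ring
  rw [Finset.sum_congr rfl hstep, binom_moment b a (by linarith) m]

lemma binom_entropy (a b : ℝ) (ha : 0 < a) (hb : 0 < b) (hab : a + b = 1) (m : ℕ) :
    ∑ i ∈ range (m+1), (m.choose i : ℝ) * ((a^i * b^(m-i)/2) * Real.logb 2 (a^i * b^(m-i)/2))
      = (m * (a * Real.logb 2 a + b * Real.logb 2 b) - 1)/2 := by
  have hstep : ∀ i ∈ range (m+1),
      (m.choose i : ℝ) * ((a^i * b^(m-i)/2) * Real.logb 2 (a^i * b^(m-i)/2))
      = (Real.logb 2 a / 2) * ((i:ℝ) * (m.choose i:ℝ) * (a^i * b^(m-i)))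
        + (Real.logb 2 b / 2) * (((m-i:ℕ):ℝ) * (m.choose i:ℝ) * (a^i * b^(m-i)))
        - (1/2) * ((m.choose i:ℝ) * (a^i * b^(m-i))) := by
    intro i hi
    have hL : Real.logb 2 (a^i * b^(m-i)/2)
        = (i:ℝ) * Real.logb 2 a + ((m-i:ℕ):ℝ) * Real.logb 2 b - 1 := by
      rw [Real.logb_div (by positivity) (by norm_num),
          Real.logb_mul (by positivity) (by positivity),
          Real.logb_pow, Real.logb_pow, Real.logb_self_eq_one (by norm_num)]
    rw [hL]; ring
  rw [Finset.sum_congr rfl hstep]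
  simp only [Finset.sum_sub_distrib, Finset.sum_add_distrib, ← Finset.mul_sum]
  rw [binom_moment a b hab, binom_moment_rev a b hab, binom_sum, hab, one_pow]
  have : ((m:ℝ) * a) + ((m:ℝ) * b) = m := by rw [← mul_add, hab, mul_one]
  ring

lemma sum_split (f : ℕ → ℝ) (k : ℕ) :
    ∑ i ∈ range (k+2), f i = f 0 + (∑ i ∈ Finset.Icc 1 k, f i) + f (k+1) := by
  rw [Finset.sum_range_succ, Finset.sum_range_succ', ← Finset.Ico_add_one_right_eq_Icc,
    Finset.sum_Ico_eq_sum_range]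
  simp only [Nat.succ_sub_one, Nat.add_sub_cancel]
  rw [Finset.sum_congr rfl (fun i _ => by rw [add_comm 1 i] : ∀ i ∈ range k, f (1+i) = f (i+1))]
  ring

lemma odd_form (g : ℝ) (hg0 : 0 < g) (hg1 : g < 1) (m : ℕ) (hm : 1 ≤ m) :
    -(2 * (((1-g)^m + g^m)/2) * Real.logb 2 (((1-g)^m + g^m)/2)
      + ∑ i ∈ Finset.Icc 1 (m - 1),
          2 * (m.choose (m - i) : ℝ) * ((1-g)^i * g^(m - i)/2)
            * Real.logb 2 ((1-g)^i * g^(m - i)/2))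
    = m * (-((1-g) * Real.logb 2 (1-g)) - g * Real.logb 2 g) + 1
      + (mgPhi ((1-g)^m) + mgPhi (g^m) - mgPhi ((1-g)^m + g^m)) := by
  obtain ⟨k, rfl⟩ : ∃ k, m = k + 1 := ⟨m - 1, by omega⟩
  set a := 1 - g with ha_def
  have ha : 0 < a := by simp [ha_def]; linarith
  set f : ℕ → ℝ := fun i =>
    ((k+1).choose i : ℝ) * ((a^i * g^(k+1-i)/2) * Real.logb 2 (a^i * g^(k+1-i)/2)) with hf
  have hsum : ∑ i ∈ Finset.Icc 1 ((k+1) - 1),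
      2 * ((k+1).choose ((k+1) - i) : ℝ) * (a^i * g^((k+1) - i)/2)
        * Real.logb 2 (a^i * g^((k+1) - i)/2)
      = 2 * ∑ i ∈ Finset.Icc 1 k, f i := by
    rw [Finset.mul_sum]
    refine Finset.sum_congr (by norm_num) fun i hi => ?_
    have hi' : i ≤ k + 1 := by
      have := (Finset.mem_Icc.mp hi).2; omega
    rw [hf]
    simp only []
    rw [Nat.choose_symm hi']
    ring
  have hsplit := sum_split f k
  have hfull := binom_entropy a g ha hg0 (by linarith) (k+1)
  have hzero : f 0 = mgPhi (g^(k+1)) / 2 := by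
    simp only [hf, mgPhi, Nat.choose_zero_right, pow_zero, one_mul, Nat.sub_zero, Nat.cast_one]
    ring
  have htop : f (k+1) = mgPhi (a^(k+1)) / 2 := by
    simp only [hf, mgPhi, Nat.choose_self, Nat.sub_self, pow_zero, mul_one, Nat.cast_one]
    ring
  have hc : 2 * ((a^(k+1) + g^(k+1))/2) * Real.logb 2 ((a^(k+1) + g^(k+1))/2)
      = mgPhi (a^(k+1) + g^(k+1)) := by
    simp only [mgPhi]; ring
  have hIcc : ∑ i ∈ Finset.Icc 1 k, f i
      = (((k+1:ℕ)):ℝ) * (a * Real.logb 2 a + g * Real.logb 2 g) / 2 - 1/2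
        - mgPhi (g^(k+1)) / 2 - mgPhi (a^(k+1)) / 2 := by
    have : ∑ i ∈ range (k+2), f i
        = ((((k+1:ℕ)):ℝ) * (a * Real.logb 2 a + g * Real.logb 2 g) - 1)/2 := hfull
    rw [hsplit, hzero, htop] at this
    linarith
  rw [hsum, hc, hIcc]
  push_cast
  ring

lemma even_form (g : ℝ) (hg0 : 0 < g) (hg1 : g < 1) (m : ℕ) (hm : 1 ≤ m) :
    -((((1-g)^m + g^(m + 1))/2) * Real.logb 2 (((1-g)^m + g^(m + 1))/2)
      + ∑ i ∈ Finset.Icc 1 (m - 1),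
          (m.choose i : ℝ) * (g^i * (1-g)^(m - i)/2)
            * Real.logb 2 (g^i * (1-g)^(m - i)/2)
      + ∑ i ∈ Finset.Icc 1 m,
          ((m + 1).choose i : ℝ) * (g^(m - i + 1) * (1-g)^i/2)
            * Real.logb 2 (g^(m - i + 1) * (1-g)^i/2)
      + (((1-g)^(m + 1) + g^m)/2) * Real.logb 2 (((1-g)^(m + 1) + g^m)/2))
    = ((2*(m:ℝ)+1)/2) * (-((1-g) * Real.logb 2 (1-g)) - g * Real.logb 2 g) + 1
      + (1/2) * (mgPhi ((1-g)^m) + mgPhi (g^m) + mgPhi ((1-g)^(m+1)) + mgPhi (g^(m+1))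
          - mgPhi ((1-g)^m + g^(m+1)) - mgPhi ((1-g)^(m+1) + g^m)) := by
  obtain ⟨k, rfl⟩ : ∃ k, m = k + 1 := ⟨m - 1, by omega⟩
  set a := 1 - g with ha_def
  have ha : 0 < a := by simp [ha_def]; linarith
  have hab : g + a = 1 := by rw [ha_def]; ring
  have hba : a + g = 1 := by rw [ha_def]; ring
  -- first sum
  set f1 : ℕ → ℝ := fun i =>
    ((k+1).choose i : ℝ) * ((g^i * a^(k+1-i)/2) * Real.logb 2 (g^i * a^(k+1-i)/2)) with hf1
  have hsum1 : ∑ i ∈ Finset.Icc 1 ((k+1) - 1),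
      ((k+1).choose i : ℝ) * (g^i * a^((k+1) - i)/2) * Real.logb 2 (g^i * a^((k+1) - i)/2)
      = ∑ i ∈ Finset.Icc 1 k, f1 i := by
    refine Finset.sum_congr (by norm_num) fun i hi => ?_
    rw [hf1]; ring
  have hfull1 : ∑ i ∈ range (k+2), f1 i
      = ((((k+1:ℕ)):ℝ) * (g * Real.logb 2 g + a * Real.logb 2 a) - 1)/2 :=
    binom_entropy g a hg0 ha hab (k+1)
  have hzero1 : f1 0 = mgPhi (a^(k+1)) / 2 := by
    simp only [hf1, mgPhi, Nat.choose_zero_right, pow_zero, one_mul, Nat.sub_zero, Nat.cast_one]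
    ring
  have htop1 : f1 (k+1) = mgPhi (g^(k+1)) / 2 := by
    simp only [hf1, mgPhi, Nat.choose_self, Nat.sub_self, pow_zero, mul_one, Nat.cast_one]
    ring
  have hIcc1 : ∑ i ∈ Finset.Icc 1 k, f1 i
      = (((k+1:ℕ)):ℝ) * (g * Real.logb 2 g + a * Real.logb 2 a) / 2 - 1/2
        - mgPhi (a^(k+1)) / 2 - mgPhi (g^(k+1)) / 2 := by
    have h := sum_split f1 k
    rw [hfull1, hzero1, htop1] at h
    linarith
  -- second sum
  set f2 : ℕ → ℝ := fun i =>
    ((k+2).choose i : ℝ) * ((a^i * g^(k+2-i)/2) * Real.logb 2 (a^i * g^(k+2-i)/2)) with hf2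
  have hsum2 : ∑ i ∈ Finset.Icc 1 (k+1),
      ((k+1+1).choose i : ℝ) * (g^(k+1 - i + 1) * a^i/2) * Real.logb 2 (g^(k+1 - i + 1) * a^i/2)
      = ∑ i ∈ Finset.Icc 1 (k+1), f2 i := by
    refine Finset.sum_congr rfl fun i hi => ?_
    have hi' : i ≤ k + 1 := (Finset.mem_Icc.mp hi).2
    have he : k + 1 - i + 1 = k + 2 - i := by omega
    rw [hf2]
    simp only [he]
    have h22 : k + 1 + 1 = k + 2 := rfl
    rw [h22]
    ring
  have hfull2 : ∑ i ∈ range (k+3), f2 i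
      = ((((k+2:ℕ)):ℝ) * (a * Real.logb 2 a + g * Real.logb 2 g) - 1)/2 :=
    binom_entropy a g ha hg0 hba (k+2)
  have hzero2 : f2 0 = mgPhi (g^(k+2)) / 2 := by
    simp only [hf2, mgPhi, Nat.choose_zero_right, pow_zero, one_mul, Nat.sub_zero, Nat.cast_one]
    ring
  have htop2 : f2 (k+2) = mgPhi (a^(k+2)) / 2 := by
    simp only [hf2, mgPhi, Nat.choose_self, Nat.sub_self, pow_zero, mul_one, Nat.cast_one]
    ring
  have hIcc2 : ∑ i ∈ Finset.Icc 1 (k+1), f2 i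
      = (((k+2:ℕ)):ℝ) * (a * Real.logb 2 a + g * Real.logb 2 g) / 2 - 1/2
        - mgPhi (g^(k+2)) / 2 - mgPhi (a^(k+2)) / 2 := by
    have h := sum_split f2 (k+1)
    rw [hfull2, hzero2, htop2] at h
    linarith
  -- boundary terms
  have hc0 : ((a^(k+1) + g^(k+1+1))/2) * Real.logb 2 ((a^(k+1) + g^(k+1+1))/2)
      = mgPhi (a^(k+1) + g^(k+2)) / 2 := by
    simp only [mgPhi]; ring
  have hc1 : ((a^(k+1+1) + g^(k+1))/2) * Real.logb 2 ((a^(k+1+1) + g^(k+1))/2)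
      = mgPhi (a^(k+2) + g^(k+1)) / 2 := by
    simp only [mgPhi]; ring
  rw [hc0, hc1, hsum1, hsum2, hIcc1, hIcc2]
  push_cast
  have hkk : a^(k+1+1) = a^(k+2) := rfl
  have hgg : g^(k+1+1) = g^(k+2) := rfl
  rw [hkk, hgg]
  ring

lemma phi_pow_tendsto {x : ℝ} (h0 : 0 ≤ x) (h1 : x < 1) :
    Tendsto (fun m : ℕ => mgPhi (x^m)) atTop (nhds 0) :=
  mgPhi_tendsto.comp (tendsto_pow_atTop_nhds_zero_of_lt_one h0 h1)

lemma phi_pow_add_tendsto {x y : ℝ} (hx0 : 0 ≤ x) (hx1 : x < 1) (hy0 : 0 ≤ y) (hy1 : y < 1)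
    {p q : ℕ → ℕ} (hp : Tendsto p atTop atTop) (hq : Tendsto q atTop atTop) :
    Tendsto (fun m : ℕ => mgPhi (x^(p m) + y^(q m))) atTop (nhds 0) := by
  have hx := (tendsto_pow_atTop_nhds_zero_of_lt_one hx0 hx1).comp hp
  have hy := (tendsto_pow_atTop_nhds_zero_of_lt_one hy0 hy1).comp hq
  have hsum : Tendsto (fun m : ℕ => x^(p m) + y^(q m)) atTop (nhds 0) := by
    simpa using hx.add hy
  exact mgPhi_tendsto.comp hsum

/-- correction in the odd case -/
noncomputable def mgE (g : ℝ) (m : ℕ) : ℝ :=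
  mgPhi ((1-g)^m) + mgPhi (g^m) - mgPhi ((1-g)^m + g^m)

/-- correction in the even case -/
noncomputable def mgF (g : ℝ) (m : ℕ) : ℝ :=
  (1/2) * (mgPhi ((1-g)^m) + mgPhi (g^m) + mgPhi ((1-g)^(m+1)) + mgPhi (g^(m+1))
    - mgPhi ((1-g)^m + g^(m+1)) - mgPhi ((1-g)^(m+1) + g^m))

lemma tendsto_ite_zero {p : ℕ → Prop} [DecidablePred p] {f₁ f₂ : ℕ → ℝ}
    (hf : Tendsto f₁ atTop (nhds 0)) (hh : Tendsto f₂ atTop (nhds 0)) :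
    Tendsto (fun n => if p n then f₁ n else f₂ n) atTop (nhds 0) := by
  have habs : Tendsto (fun n => |f₁ n| + |f₂ n|) atTop (nhds 0) := by
    simpa using hf.abs.add hh.abs
  refine tendsto_of_tendsto_of_tendsto_of_le_of_le
    (g := fun n => -(|f₁ n| + |f₂ n|)) (h := fun n => |f₁ n| + |f₂ n|)
    (by simpa using habs.neg) habs (fun n => ?_) (fun n => ?_)
  · by_cases hp : p n <;> simp only [hp, if_true, if_false] <;>
      cases abs_cases (f₁ n) <;> cases abs_cases (f₂ n) <;> linarith
  · by_cases hp : p n <;> simp only [hp, if_true, if_false] <;>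
      cases abs_cases (f₁ n) <;> cases abs_cases (f₂ n) <;> linarith

/-- The quantum capacity of the channel correlated by the parametrized Majumdar–Ghosh
state is `Q = log₂ 2 − lim S/n = 1 + (g/2)log₂ g + ((1−g)/2)log₂(1−g)`; equivalently the
diagonal entropy rate is `−(g/2)log₂ g − ((1−g)/2)log₂(1−g)`. -/
theorem mg_capacity (g : ℝ) (hg : g ∈ Set.Ioo (0:ℝ) 1) :
    Tendsto (fun n : ℕ => mgDiagEntropy g n / n) atTop
      (nhds (-(g/2) * Real.logb 2 g - ((1-g)/2) * Real.logb 2 (1-g))) := by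
  obtain ⟨hg0, hg1⟩ := hg
  have ha0 : (0:ℝ) ≤ 1 - g := by linarith
  have ha1 : 1 - g < 1 := by linarith
  set h : ℝ := -((1-g) * Real.logb 2 (1-g)) - g * Real.logb 2 g with hh
  have hm1 : Tendsto (fun n : ℕ => (n+1)/2) atTop atTop :=
    tendsto_atTop_atTop.2 fun b => ⟨2*b, fun n hn => by omega⟩
  have hm2 : Tendsto (fun n : ℕ => n/2) atTop atTop :=
    tendsto_atTop_atTop.2 fun b => ⟨2*b, fun n hn => by omega⟩
  have hm2' : Tendsto (fun n : ℕ => n/2 + 1) atTop atTop :=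
    tendsto_atTop_atTop.2 fun b => ⟨2*b, fun n hn => by omega⟩
  have hE : Tendsto (fun n : ℕ => mgE g ((n+1)/2)) atTop (nhds 0) := by
    have t1 := (phi_pow_tendsto ha0 ha1).comp hm1
    have t2 := (phi_pow_tendsto (le_of_lt hg0) hg1).comp hm1
    have t3 := phi_pow_add_tendsto ha0 ha1 (le_of_lt hg0) hg1 hm1 hm1
    have := (t1.add t2).sub t3
    simpa [mgE, Function.comp] using this
  have hF : Tendsto (fun n : ℕ => mgF g (n/2)) atTop (nhds 0) := by
    have t1 := (phi_pow_tendsto ha0 ha1).comp hm2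
    have t2 := (phi_pow_tendsto (le_of_lt hg0) hg1).comp hm2
    have t3 := (phi_pow_tendsto ha0 ha1).comp hm2'
    have t4 := (phi_pow_tendsto (le_of_lt hg0) hg1).comp hm2'
    have t5 := phi_pow_add_tendsto ha0 ha1 (le_of_lt hg0) hg1 hm2 hm2'
    have t6 := phi_pow_add_tendsto ha0 ha1 (le_of_lt hg0) hg1 hm2' hm2
    have := ((((((t1.add t2).add t3).add t4).sub t5).sub t6).const_mul (1/2 : ℝ))
    simpa [mgF, Function.comp, mul_add, mul_sub] using this
  have hIte : Tendsto (fun n => if Odd n then mgE g ((n+1)/2) else mgF g (n/2))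
      atTop (nhds 0) := tendsto_ite_zero hE hF
  have key : ∀ᶠ n in atTop, mgDiagEntropy g n
      = (n:ℝ)/2 * h + (h/2 + 1 + (if Odd n then mgE g ((n+1)/2) else mgF g (n/2))) := by
    filter_upwards [eventually_ge_atTop 2] with n hn
    by_cases hodd : Odd n
    · obtain ⟨k, hk⟩ := hodd
      have hkm : (n+1)/2 = k + 1 := by omega
      have hcast : (((n+1)/2 : ℕ) : ℝ) = ((n:ℝ)+1)/2 := by
        rw [hkm]; subst hk; push_cast; ring
      rw [mgDiagEntropy, if_pos ⟨k, hk⟩,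
        odd_form g hg0 hg1 ((n+1)/2) (by omega), if_pos ⟨k, hk⟩, hcast, mgE, hh]
      ring
    · have hkm : n = 2 * (n/2) := by
        rcases Nat.even_or_odd n with he | ho
        · obtain ⟨k, hk⟩ := he; omega
        · exact absurd ho hodd
      have hcast : ((n/2 : ℕ) : ℝ) = (n:ℝ)/2 := by
        rw [show ((n:ℝ)) = ((2 * (n/2) : ℕ) : ℝ) from by rw [← hkm]]
        push_cast; ring
      rw [mgDiagEntropy, if_neg hodd,
        even_form g hg0 hg1 (n/2) (by omega), if_neg hodd, mgF, hh, hcast]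
      ring
  have hInv : Tendsto (fun n : ℕ => ((n:ℝ))⁻¹) atTop (nhds 0) :=
    tendsto_inv_atTop_zero.comp tendsto_natCast_atTop_atTop
  have hR : Tendsto (fun n : ℕ =>
      (h/2 + 1 + (if Odd n then mgE g ((n+1)/2) else mgF g (n/2))) * ((n:ℝ))⁻¹)
      atTop (nhds 0) := by
    have hc2 : Tendsto (fun _ : ℕ => h/2 + 1) atTop (nhds (h/2+1)) := tendsto_const_nhds
    have := (hc2.add hIte).mul hInv
    simpa using this
  have hdiv : ∀ᶠ n in atTop, h/2
      + (h/2 + 1 + (if Odd n then mgE g ((n+1)/2) else mgF g (n/2))) * ((n:ℝ))⁻¹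
      = mgDiagEntropy g n / n := by
    filter_upwards [key, eventually_ge_atTop 1] with n hkey hn
    have hne : (n:ℝ) ≠ 0 := Nat.cast_ne_zero.2 (by omega)
    rw [hkey]
    field_simp
  have hmain : Tendsto (fun n : ℕ => mgDiagEntropy g n / n) atTop (nhds (h/2)) := by
    have hc : Tendsto (fun _ : ℕ => h/2) atTop (nhds (h/2)) := tendsto_const_nhds
    have := hc.add hR
    rw [add_zero] at this
    exact this.congr' hdiv
  have hval : -(g/2) * Real.logb 2 g - ((1-g)/2) * Real.logb 2 (1-g) = h/2 := by
    rw [hh]; ring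
  rw [hval]
  exact hmain
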